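/- Let τ be a 2-positive unital map on a C*-algebra A with invariant state φ. If φ(τ^n(x*)τ^n(x)) → |φ(x)|² for all x ∈ A (Kolmogorov property), then φ(τ^n(x*)y) → φ(x*)φ(y) for all x, y ∈ A (strong mixing). -/

import Mathlib

open Filter Topology
open scoped ComplexOrder

section Aux

variable {A : Type*} [NormedRing A] [StarRing A] [CStarRing A]
    [PartialOrder A] [StarOrderedRing A]
    [NormedAlgebra ℂ A] [StarModule ℂ A] [CompleteSpace A]

/-- A linear map sending nonnegative elements to selfadjoint elements is star-preserving. -/
lemma aux_star_map {B : Type*} [AddCommGroup B] [Module ℂ B] [StarAddMonoid B]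
    [StarModule ℂ B] (f : A →ₗ[ℂ] B) (hf : ∀ a : A, 0 ≤ a → IsSelfAdjoint (f a)) (x : A) :
    f (star x) = star (f x) := by
  letI : CStarAlgebra A := ⟨⟩
  have hsa : ∀ h : A, IsSelfAdjoint h → IsSelfAdjoint (f h) := by
    intro h hh
    have hdecomp : h = h⁺ - h⁻ := (CFC.posPart_sub_negPart h hh).symm
    rw [hdecomp, map_sub]
    exact (hf _ (CFC.posPart_nonneg h)).sub (hf _ (CFC.negPart_nonneg h))
  set h : A := x + star x with hh_def
  set k : A := Complex.I • (x - star x) with hk_def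
  have hh : IsSelfAdjoint h := by
    simp [hh_def, IsSelfAdjoint, star_add, add_comm]
  have hk : IsSelfAdjoint k := by
    simp only [hk_def, IsSelfAdjoint, star_smul, star_sub, star_star, Complex.star_def,
      Complex.conj_I, neg_smul, neg_sub, smul_sub]
    abel
  have e1 : (2:ℂ) • star x = h + Complex.I • k := by
    rw [hh_def, hk_def, smul_smul, Complex.I_mul_I, neg_smul, one_smul, two_smul]
    abel
  have e2 : (2:ℂ) • x = h - Complex.I • k := by
    rw [hh_def, hk_def, smul_smul, Complex.I_mul_I, neg_smul, one_smul, two_smul]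
    abel
  clear_value h k
  have key : (2:ℂ) • f (star x) = (2:ℂ) • star (f x) := by
    calc (2:ℂ) • f (star x) = f ((2:ℂ) • star x) := by rw [map_smul]
    _ = f h + Complex.I • f k := by rw [e1, map_add, map_smul]
    _ = star (f h) + Complex.I • f k := by rw [hsa h hh]
    _ = star (f h - Complex.I • f k) := by
        rw [star_sub, star_smul, Complex.star_def, Complex.conj_I, neg_smul, sub_neg_eq_add,
          hsa k hk]
    _ = star (f ((2:ℂ) • x)) := by rw [e2, map_sub, map_smul]
    _ = (2:ℂ) • star (f x) := by
        rw [map_smul, star_smul, Complex.star_def, map_ofNat]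
  have h2 : (2:ℂ) ≠ 0 := by norm_num
  exact smul_right_injective B h2 key

/-- A positive linear functional is nonneg on nonneg elements. -/
lemma aux_phi_nonneg (φ : A →ₗ[ℂ] ℂ) (hφpos : ∀ x : A, 0 ≤ φ (star x * x))
    {a : A} (ha : 0 ≤ a) : 0 ≤ φ a := by
  rw [StarOrderedRing.nonneg_iff] at ha
  induction ha using AddSubmonoid.closure_induction with
  | mem x hx => obtain ⟨s, rfl⟩ := hx; exact hφpos s
  | zero => simp
  | add x y _ _ hx hy => rw [map_add]; exact add_nonneg hx hy

/-- Star-preservation of a positive functional. -/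
lemma aux_phi_star (φ : A →ₗ[ℂ] ℂ) (hφpos : ∀ x : A, 0 ≤ φ (star x * x)) (x : A) :
    φ (star x) = star (φ x) :=
  aux_star_map φ (fun a ha => by
    have := aux_phi_nonneg φ hφpos ha
    rw [Complex.nonneg_iff] at this
    rw [IsSelfAdjoint, Complex.star_def, Complex.conj_eq_iff_im]
    exact this.2.symm) x

/-- Cauchy–Schwarz inequality for a positive linear functional. -/
lemma aux_cs (φ : A →ₗ[ℂ] ℂ) (hφpos : ∀ x : A, 0 ≤ φ (star x * x)) (a b : A) :
    ‖φ (star a * b)‖ ^ 2 ≤ (φ (star a * a)).re * (φ (star b * b)).re := by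
  set s : ℂ := φ (star a * b) with hs_def
  set p : ℂ := φ (star a * a) with hp_def
  set q : ℂ := φ (star b * b) with hq_def
  have hp : 0 ≤ p := hφpos a
  have hq : 0 ≤ q := hφpos b
  have hpre : 0 ≤ p.re := (Complex.nonneg_iff.mp hp).1
  have hqre : 0 ≤ q.re := (Complex.nonneg_iff.mp hq).1
  by_cases hs : s = 0
  · rw [hs]; simpa using mul_nonneg hpre hqre
  have hsba : φ (star b * a) = star s := by
    rw [hs_def, ← aux_phi_star φ hφpos, star_mul, star_star]
  have expand : ∀ c : ℂ, 0 ≤ p + c * s + (starRingEnd ℂ c) * (starRingEnd ℂ s)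
      + (c * starRingEnd ℂ c) * q := by
    intro c
    have h0 := hφpos (a + c • b)
    have heq : star (a + c • b) * (a + c • b)
        = star a * a + c • (star a * b) + (starRingEnd ℂ c) • (star b * a)
          + (c * starRingEnd ℂ c) • (star b * b) := by
      simp only [star_add, star_smul, Complex.star_def, add_mul, mul_add, smul_mul_assoc,
        mul_smul_comm, smul_smul]
      module
    rw [heq] at h0
    simp only [map_add, map_smul, smul_eq_mul] at h0
    rw [hsba] at h0
    rw [← hp_def, ← hs_def, ← hq_def] at h0
    simp only [Complex.star_def] at h0
    convert h0 using 2 <;> ring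
  have H : ∀ r : ℝ, 0 ≤ (‖s‖ ^ 2 * q.re) * (r * r) + (-(2 * ‖s‖ ^ 2)) * r + p.re := by
    intro r
    have h0 := expand (-(r : ℂ) * (starRingEnd ℂ) s)
    have hss' : s * (starRingEnd ℂ) s = ((‖s‖ ^ 2 : ℝ) : ℂ) := by
      simp [Complex.mul_conj, Complex.normSq_eq_norm_sq]
    have heq2 : p + (-(r : ℂ) * (starRingEnd ℂ) s) * s
        + (starRingEnd ℂ (-(r : ℂ) * (starRingEnd ℂ) s)) * (starRingEnd ℂ s)
        + ((-(r : ℂ) * (starRingEnd ℂ) s) * starRingEnd ℂ (-(r : ℂ) * (starRingEnd ℂ) s)) * q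
        = p + ((-(r : ℝ) * ‖s‖ ^ 2 : ℝ) : ℂ) + ((-(r : ℝ) * ‖s‖ ^ 2 : ℝ) : ℂ)
          + (((r * r) * ‖s‖ ^ 2 : ℝ) : ℂ) * q := by
      simp only [map_mul, map_neg, Complex.conj_ofReal, Complex.conj_conj]
      push_cast
      calc p + -(r:ℂ) * (starRingEnd ℂ) s * s + -(r:ℂ) * s * (starRingEnd ℂ) s
            + (-(r:ℂ) * (starRingEnd ℂ) s * (-(r:ℂ) * s)) * q
          = p + -(r:ℂ) * (s * (starRingEnd ℂ) s) + -(r:ℂ) * (s * (starRingEnd ℂ) s)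
            + (((r:ℂ) * (r:ℂ)) * (s * (starRingEnd ℂ) s)) * q := by ring
        _ = _ := by rw [hss']; push_cast; ring
    rw [heq2] at h0
    have h0re := (Complex.nonneg_iff.mp h0).1
    simp only [Complex.add_re, Complex.ofReal_re, Complex.mul_re, Complex.ofReal_im] at h0re
    nlinarith [h0re]
  have hdisc := discrim_le_zero H
  rw [discrim] at hdisc
  have hsnorm : 0 < ‖s‖ ^ 2 := pow_pos (norm_pos_iff.mpr hs) 2
  nlinarith [hdisc, hsnorm]

end Aux

/-- Let `τ` be a 2-positive (Kadison–Schwarz) unital map on a C*-algebra `A` with invariant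
state `φ`.  If `φ(τⁿ(x*)τⁿ(x)) → |φ(x)|²` for all `x` (Kolmogorov property), then
`φ(τⁿ(x*)y) → φ(x*)φ(y)` for all `x, y` (strong mixing). -/
theorem stmt3 {A : Type*} [NormedRing A] [StarRing A] [CStarRing A]
    [PartialOrder A] [StarOrderedRing A]
    [NormedAlgebra ℂ A] [StarModule ℂ A] [CompleteSpace A]
    (φ : A →ₗ[ℂ] ℂ) (hφ1 : φ 1 = 1) (hφpos : ∀ x : A, 0 ≤ φ (star x * x))
    (τ : Module.End ℂ A) (hτ1 : τ 1 = 1) (hτpos : ∀ x : A, 0 ≤ x → 0 ≤ τ x)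
    (hKS : ∀ y : A, star (τ y) * τ y ≤ τ (star y * y))
    (hinv : ∀ x : A, φ (τ x) = φ x)
    (hKol : ∀ x : A, Tendsto (fun n : ℕ => φ ((τ ^ n) (star x) * (τ ^ n) x)) atTop
      (𝓝 (star (φ x) * φ x))) :
    ∀ x y : A, Tendsto (fun n : ℕ => φ ((τ ^ n) (star x) * y)) atTop
      (𝓝 (φ (star x) * φ y)) := by
  intro x y
  -- τ is star-preserving
  have hτstar : ∀ z : A, τ (star z) = star (τ z) :=
    aux_star_map (τ : A →ₗ[ℂ] A) (fun a ha => IsSelfAdjoint.of_nonneg (hτpos a ha))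
  have hτnstar : ∀ n : ℕ, ∀ z : A, (τ ^ n) (star z) = star ((τ ^ n) z) := by
    intro n
    induction n with
    | zero => intro z; simp
    | succ n ih =>
      intro z
      rw [pow_succ, Module.End.mul_apply, Module.End.mul_apply, hτstar, ih]
  have hφstar : ∀ z : A, φ (star z) = star (φ z) := aux_phi_star φ hφpos
  have hφinv : ∀ n : ℕ, ∀ z : A, φ ((τ ^ n) z) = φ z := by
    intro n
    induction n with
    | zero => intro z; simp
    | succ n ih => intro z; rw [pow_succ, Module.End.mul_apply, ih, hinv]
  -- the centered sequence
  set b : ℕ → A := fun n => (τ ^ n) x - φ x • 1 with hb_def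
  have hbstar : ∀ n, star (b n) = (τ ^ n) (star x) - star (φ x) • 1 := by
    intro n
    rw [hb_def]
    simp only [star_sub, star_smul, star_one, Complex.star_def, hτnstar n x]
  -- φ(star (b n) * y) is the quantity of interest, shifted
  have hval : ∀ n, φ (star (b n) * y) = φ ((τ ^ n) (star x) * y) - φ (star x) * φ y := by
    intro n
    rw [hbstar n, sub_mul, smul_mul_assoc, one_mul, map_sub, map_smul, smul_eq_mul,
      hφstar x]
  -- φ(star (b n) * b n) tends to 0
  have hp : ∀ n, φ (star (b n) * b n)
      = φ ((τ ^ n) (star x) * (τ ^ n) x) - star (φ x) * φ x := by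
    intro n
    have hexp : star (b n) * b n
        = (τ ^ n) (star x) * (τ ^ n) x - φ x • (τ ^ n) (star x)
          - star (φ x) • (τ ^ n) x + (star (φ x) * φ x) • 1 := by
      rw [hbstar n, hb_def]
      simp only [sub_mul, mul_sub, smul_mul_assoc, mul_smul_comm, one_mul, mul_one,
        smul_smul]
      module
    rw [hexp]
    simp only [map_add, map_sub, map_smul, smul_eq_mul, hφ1, mul_one]
    rw [hφinv n x, hφinv n (star x), hφstar x]
    ring
  have hptend : Tendsto (fun n => (φ (star (b n) * b n)).re) atTop (𝓝 0) := by
    have : Tendsto (fun n => φ (star (b n) * b n)) atTop (𝓝 0) := by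
      have h1 := (hKol x).sub (tendsto_const_nhds (x := star (φ x) * φ x))
      simp only [sub_self] at h1
      convert h1 using 2 with n
      exact hp n
    have := (Complex.continuous_re.tendsto 0).comp this
    simpa [Function.comp_def] using this
  -- squeeze
  set q : ℝ := (φ (star y * y)).re with hq_def
  have hqnn : 0 ≤ q := (Complex.nonneg_iff.mp (hφpos y)).1
  have hpnn : ∀ n, 0 ≤ (φ (star (b n) * b n)).re :=
    fun n => (Complex.nonneg_iff.mp (hφpos (b n))).1
  have hsq : ∀ n, ‖φ (star (b n) * y)‖ ^ 2 ≤ (φ (star (b n) * b n)).re * q :=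
    fun n => aux_cs φ hφpos (b n) y
  have hnorm2 : Tendsto (fun n => ‖φ (star (b n) * y)‖ ^ 2) atTop (𝓝 0) := by
    apply squeeze_zero (fun n => by positivity) hsq
    have := hptend.mul_const q
    simpa using this
  have hnorm : Tendsto (fun n => ‖φ (star (b n) * y)‖) atTop (𝓝 0) := by
    have h1 : Tendsto (fun n => Real.sqrt (‖φ (star (b n) * y)‖ ^ 2)) atTop (𝓝 0) := by
      have h2 := (Real.continuous_sqrt.tendsto 0).comp hnorm2
      rw [Real.sqrt_zero] at h2
      exact h2
    have heq : (fun n => Real.sqrt (‖φ (star (b n) * y)‖ ^ 2))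
        = fun n => ‖φ (star (b n) * y)‖ :=
      funext fun n => Real.sqrt_sq (norm_nonneg _)
    rwa [heq] at h1
  have htend0 : Tendsto (fun n => φ (star (b n) * y)) atTop (𝓝 0) :=
    tendsto_zero_iff_norm_tendsto_zero.mpr hnorm
  have := htend0.add (tendsto_const_nhds (x := φ (star x) * φ y))
  simp only [zero_add] at this
  convert this using 2 with n
  rw [hval n]
  ring
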